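/- arXiv:1705.05827 — 2 statements merged into one kernel-verified Lean document; each statement's English description precedes it below -/
import Mathlib

section
/- In the two-sided group digraph 2S(G;L,R), if W(L) and W(R) are subgroups of G, then there is a directed path from g to h if and only if there is a directed path from h to g. -/
open Relation

/-- `w` is a product of a list of `n` elements of `S`. -/
def IsWord {G : Type*} [Group G] (S : Set G) (n : ℕ) (w : G) : Prop :=
  ∃ l : List G, l.length = n ∧ (∀ x ∈ l, x ∈ S) ∧ l.prod = w

/-- The set of all positive-length words in `S`. -/
def WordSet {G : Type*} [Group G] (S : Set G) : Set G :=
  {w | ∃ n : ℕ, 0 < n ∧ IsWord S n w}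

/-- Arc of the two-sided group digraph `2S(G;L,R)`. -/
def Arc {G : Type*} [Group G] (L R : Set G) (g h : G) : Prop :=
  ∃ l ∈ L, ∃ r ∈ R, h = l⁻¹ * g * r

/-- Existence of a directed path (possibly of length 0). -/
def DPath {G : Type*} [Group G] (L R : Set G) : G → G → Prop :=
  ReflTransGen (Arc L R)

/-- Weak connectivity: path ignoring directions. -/
def WeakConn {G : Type*} [Group G] (L R : Set G) : G → G → Prop :=
  ReflTransGen (fun g h => Arc L R g h ∨ Arc L R h g)

/-- Strong connectivity of two vertices. -/
def StrongConn {G : Type*} [Group G] (L R : Set G) (g h : G) : Prop :=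
  DPath L R g h ∧ DPath L R h g

lemma isWord_mul {G : Type*} [Group G] {S : Set G} {m n : ℕ} {u v : G}
    (hu : IsWord S m u) (hv : IsWord S n v) : IsWord S (m + n) (u * v) := by
  obtain ⟨l1, hl1, hm1, hp1⟩ := hu
  obtain ⟨l2, hl2, hm2, hp2⟩ := hv
  exact ⟨l1 ++ l2, by simp [hl1, hl2], by
    intro x hx; rcases List.mem_append.1 hx with h | h
    exacts [hm1 x h, hm2 x h], by simp [hp1, hp2]⟩

lemma isWord_one_pow {G : Type*} [Group G] {S : Set G} {p : ℕ}
    (hp : IsWord S p (1 : G)) : ∀ k : ℕ, IsWord S (k * p) (1 : G) := by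
  intro k
  induction k with
  | zero => exact ⟨[], by simp⟩
  | succ k ih =>
    have := isWord_mul ih hp
    simpa [Nat.succ_mul] using this

lemma dpath_of_words {G : Type*} [Group G] {L R : Set G} :
    ∀ (l1 l2 : List G), l1.length = l2.length → (∀ x ∈ l1, x ∈ L) → (∀ x ∈ l2, x ∈ R) →
      ∀ g : G, DPath L R g (l1.prod⁻¹ * g * l2.prod) := by
  intro l1
  induction l1 with
  | nil =>
    intro l2 hlen _ _ g
    have : l2 = [] := List.length_eq_zero_iff.1 hlen.symm
    subst this
    simpa [DPath] using (ReflTransGen.refl : ReflTransGen (Arc L R) g g)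
  | cons x xs ih =>
    intro l2 hlen hmL hmR g
    cases l2 with
    | nil => simp at hlen
    | cons y ys =>
      have harc : Arc L R g (x⁻¹ * g * y) :=
        ⟨x, hmL x (by simp), y, hmR y (by simp), rfl⟩
      have hpath := ih ys (by simpa using hlen)
        (fun z hz => hmL z (by simp [hz])) (fun z hz => hmR z (by simp [hz])) (x⁻¹ * g * y)
      have heq : xs.prod⁻¹ * (x⁻¹ * g * y) * ys.prod
          = (x :: xs).prod⁻¹ * g * (y :: ys).prod := by
        simp [mul_assoc]
      rw [heq] at hpath
      exact ReflTransGen.head harc hpath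

lemma dpath_iff_words {G : Type*} [Group G] {L R : Set G} {g h : G} :
    DPath L R g h ↔ ∃ n : ℕ, ∃ w1 w2 : G, IsWord L n w1 ∧ IsWord R n w2 ∧
      h = w1⁻¹ * g * w2 := by
  constructor
  · intro hp
    induction hp with
    | refl => exact ⟨0, 1, 1, ⟨[], by simp⟩, ⟨[], by simp⟩, by simp⟩
    | tail _ harc ih =>
      obtain ⟨n, w1, w2, hw1, hw2, heq⟩ := ih
      obtain ⟨l, hl, r, hr, heq'⟩ := harc
      refine ⟨n + 1, w1 * l, w2 * r, isWord_mul hw1 ⟨[l], by simp, by simpa using hl, by simp⟩,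
        isWord_mul hw2 ⟨[r], by simp, by simpa using hr, by simp⟩, ?_⟩
      rw [heq', heq]
      group
  · rintro ⟨n, w1, w2, ⟨l1, hl1, hm1, hp1⟩, ⟨l2, hl2, hm2, hp2⟩, heq⟩
    subst heq
    rw [← hp1, ← hp2]
    exact dpath_of_words l1 l2 (by omega) hm1 hm2 g

theorem stmt_3 {G : Type*} [Group G] (L R : Set G) (hL : L.Nonempty) (hR : R.Nonempty)
    (hWL : ∃ H : Subgroup G, WordSet L = (H : Set G))
    (hWR : ∃ H : Subgroup G, WordSet R = (H : Set G)) :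
    ∀ g h : G, DPath L R g h ↔ DPath L R h g := by
  obtain ⟨HL, hHL⟩ := hWL
  obtain ⟨HR, hHR⟩ := hWR
  have key : ∀ g h : G, DPath L R g h → DPath L R h g := by
    intro g h hp
    obtain ⟨n, w1, w2, hw1, hw2, heq⟩ := dpath_iff_words.1 hp
    rcases Nat.eq_zero_or_pos n with hn | hn
    · subst hn
      obtain ⟨l1, hl1, -, hp1⟩ := hw1
      obtain ⟨l2, hl2, -, hp2⟩ := hw2
      have h1 : w1 = 1 := by rw [← hp1, List.length_eq_zero_iff.1 hl1]; simp
      have h2 : w2 = 1 := by rw [← hp2, List.length_eq_zero_iff.1 hl2]; simp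
      rw [heq, h1, h2]
      simpa [DPath] using (ReflTransGen.refl : ReflTransGen (Arc L R) g g)
    · -- w1⁻¹ is a word in L of some positive length a
      have hw1m : w1 ∈ WordSet L := ⟨n, hn, hw1⟩
      have hw2m : w2 ∈ WordSet R := ⟨n, hn, hw2⟩
      have hw1i : w1⁻¹ ∈ WordSet L := by
        rw [hHL] at hw1m ⊢; exact HL.inv_mem hw1m
      have hw2i : w2⁻¹ ∈ WordSet R := by
        rw [hHR] at hw2m ⊢; exact HR.inv_mem hw2m
      obtain ⟨a, ha, hwa⟩ := hw1i
      obtain ⟨b, hb, hwb⟩ := hw2i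
      -- identity words
      have hidL : IsWord L (n + a) (1 : G) := by
        simpa using isWord_mul hw1 hwa
      have hidR : IsWord R (n + b) (1 : G) := by
        simpa using isWord_mul hw2 hwb
      -- common length N
      have hu : IsWord L (a + (n + b - 1) * (n + a)) w1⁻¹ := by
        simpa using isWord_mul hwa (isWord_one_pow hidL (n + b - 1))
      have hv : IsWord R (b + (n + a - 1) * (n + b)) w2⁻¹ := by
        simpa using isWord_mul hwb (isWord_one_pow hidR (n + a - 1))
      have hNeq : a + (n + b - 1) * (n + a) = b + (n + a - 1) * (n + b) := by
        obtain ⟨a', rfl⟩ := Nat.exists_eq_succ_of_ne_zero (Nat.pos_iff_ne_zero.1 ha)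
        obtain ⟨b', rfl⟩ := Nat.exists_eq_succ_of_ne_zero (Nat.pos_iff_ne_zero.1 hb)
        have e1 : n + (a' + 1) - 1 = n + a' := by omega
        have e2 : n + (b' + 1) - 1 = n + b' := by omega
        rw [e1, e2]
        simp only [Nat.succ_eq_add_one]
        ring
      rw [hNeq] at hu
      refine dpath_iff_words.2 ⟨b + (n + a - 1) * (n + b), w1⁻¹, w2⁻¹, hu, hv, ?_⟩
      rw [heq]
      group
  intro g h
  exact ⟨key g h, key h g⟩
end

section
/- Let L and R be nonempty subsets of a group G with G = W(L∪L⁻¹)·W(R∪R⁻¹), and suppose L ∩ N_G(L) ≠ ∅ or R ∩ N_G(R) ≠ ∅, where N_G(S) = {g ∈ G : g⁻¹Sg = S}. If the minimum weak connection length k of G relative to (L,R) is finite, then all k weakly connected components of 2S(G;L,R) are isomorphic as digraphs. -/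
open Relation Pointwise

/-- The normalizer of a subset: elements `g` with `g⁻¹ S g = S`. -/
def SetNormalizer {G : Type*} [Group G] (S : Set G) : Set G :=
  {g : G | (fun x => g⁻¹ * x * g) '' S = S}

section Aux

variable {G : Type*} [Group G] (L R : Set G)

lemma weakConn_symm {x y : G} (h : WeakConn L R x y) : WeakConn L R y x :=
  (@ReflTransGen.stdSymm _ _ ⟨fun _ _ hab => hab.symm⟩).symm _ _ h

lemma harc_all (σ : ℤ → G ≃ G) (h0 : ∀ x, σ 0 x = x)
    (hadd : ∀ i j x, σ (i + j) x = σ i (σ j x))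
    (h1 : ∀ x y, Arc L R x y ↔ Arc L R (σ 1 x) (σ 1 y)) :
    ∀ (j : ℤ) (x y : G), Arc L R x y ↔ Arc L R (σ j x) (σ j y) := by
  have hcan : ∀ (i : ℤ) (z : G), σ i (σ (-i) z) = z := by
    intro i z
    rw [← hadd]
    simp [h0]
  have hneg : ∀ x y, Arc L R x y ↔ Arc L R (σ (-1) x) (σ (-1) y) := by
    intro x y
    rw [h1 (σ (-1) x) (σ (-1) y), hcan 1 x, hcan 1 y]
  intro j
  induction j using Int.induction_on with
  | zero => intro x y; rw [h0, h0]
  | succ i ih =>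
    intro x y
    have e : ∀ z : G, σ (i + 1 : ℤ) z = σ i (σ 1 z) := fun z => hadd i 1 z
    rw [e, e, ← ih, ← h1]
  | pred i ih =>
    intro x y
    have e : ∀ z : G, σ (-(i : ℤ) - 1) z = σ (-i) (σ (-1) z) := by
      intro z
      rw [show (-(i : ℤ) - 1) = -(i : ℤ) + -1 by ring, hadd]
    rw [e, e, ← ih, ← hneg]

lemma abstract_main (σ : ℤ → G ≃ G) (h0 : ∀ x, σ 0 x = x)
    (hadd : ∀ i j x, σ (i + j) x = σ i (σ j x))
    (h1 : ∀ x y, Arc L R x y ↔ Arc L R (σ 1 x) (σ 1 y))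
    (hcov : ∀ g : G, ∃ m : ℤ, WeakConn L R g (σ m 1)) :
    ∀ C ∈ {C : Set G | ∃ g : G, C = {h | WeakConn L R g h}},
      ∀ D ∈ {C : Set G | ∃ g : G, C = {h | WeakConn L R g h}},
        ∃ φ : C ≃ D, ∀ x y : C, Arc L R (x : G) (y : G) ↔ Arc L R (φ x : G) (φ y : G) := by
  have harc := harc_all L R σ h0 hadd h1
  have wl : ∀ (j : ℤ) (x y : G), WeakConn L R x y → WeakConn L R (σ j x) (σ j y) :=
    fun j x y h =>
      ReflTransGen.lift (r := fun g h => Arc L R g h ∨ Arc L R h g) (p := fun g h => Arc L R g h ∨ Arc L R h g) (σ j) (by intro a b hab; exact hab.imp ((harc j a b).mp) ((harc j b a).mp)) _ _ h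
  rintro C ⟨g, rfl⟩ D ⟨g', rfl⟩
  obtain ⟨m, hm⟩ := hcov g
  obtain ⟨m', hm'⟩ := hcov g'
  set j : ℤ := m' - m with hj
  have hcan : ∀ z : G, σ (-j) (σ j z) = z := by
    intro z
    rw [← hadd]
    simp [h0]
  have hgj : WeakConn L R g' (σ j g) := by
    have h2 : WeakConn L R (σ j g) (σ j (σ m 1)) := wl j _ _ hm
    have h3 : σ j (σ m (1 : G)) = σ m' 1 := by
      rw [← hadd, show j + m = m' by omega]
    rw [h3] at h2
    exact hm'.trans (weakConn_symm L R h2)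
  have hmem : ∀ h : G, WeakConn L R g h ↔ WeakConn L R g' (σ j h) := by
    intro h
    constructor
    · intro hh
      exact hgj.trans (wl j _ _ hh)
    · intro hh
      have h4 : WeakConn L R (σ j g) (σ j h) := (weakConn_symm L R hgj).trans hh
      have h5 := wl (-j) _ _ h4
      rwa [hcan, hcan] at h5
  exact ⟨Equiv.subtypeEquiv (σ j) hmem, fun x y => harc j x y⟩

lemma conj_mem {t : G} (htN : t ∈ SetNormalizer L) {l : G} (hl : l ∈ L) :
    t⁻¹ * l * t ∈ L := by
  have h : t⁻¹ * l * t ∈ (fun x => t⁻¹ * x * t) '' L := ⟨l, hl, rfl⟩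
  rwa [htN] at h

lemma conj_mem' {t : G} (htN : t ∈ SetNormalizer L) {l : G} (hl : l ∈ L) :
    t * l * t⁻¹ ∈ L := by
  have hl' : l ∈ (fun x => t⁻¹ * x * t) '' L := by rw [htN]; exact hl
  obtain ⟨x, hx, hxe⟩ := hl'
  have e : t * l * t⁻¹ = x := by rw [← hxe]; group
  rw [e]; exact hx

lemma harc1_left {t : G} (htN : t ∈ SetNormalizer L) (x y : G) :
    Arc L R x y ↔ Arc L R (t * x) (t * y) := by
  constructor
  · rintro ⟨l, hl, r, hr, rfl⟩
    exact ⟨t * l * t⁻¹, conj_mem' L htN hl, r, hr, by group⟩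
  · rintro ⟨l, hl, r, hr, h⟩
    refine ⟨t⁻¹ * l * t, conj_mem L htN hl, r, hr, ?_⟩
    have e : y = t⁻¹ * (l⁻¹ * (t * x) * r) := by rw [← h]; group
    rw [e]; group

lemma harc1_right {t : G} (htN : t ∈ SetNormalizer R) (x y : G) :
    Arc L R x y ↔ Arc L R (x * t) (y * t) := by
  constructor
  · rintro ⟨l, hl, r, hr, rfl⟩
    exact ⟨l, hl, t⁻¹ * r * t, conj_mem R htN hr, by group⟩
  · rintro ⟨l, hl, r, hr, h⟩
    refine ⟨l, hl, t * r * t⁻¹, conj_mem' R htN hr, ?_⟩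
    have e : y = (l⁻¹ * (x * t) * r) * t⁻¹ := by rw [← h]; group
    rw [e]; group

lemma stepA_left {t : G} (htL : t ∈ L)
    (wl1 : ∀ x y : G, WeakConn L R x y → WeakConn L R (t * x) (t * y))
    (wlm : ∀ x y : G, WeakConn L R x y → WeakConn L R (t⁻¹ * x) (t⁻¹ * y)) :
    ∀ lv : List G, (∀ x ∈ lv, x ∈ R ∪ R⁻¹) → ∀ u : G,
      ∃ a : ℤ, WeakConn L R (u * lv.prod) (t ^ a * u) := by
  intro lv
  induction lv using List.reverseRecOn with
  | nil => intro _ u; exact ⟨0, by simp only [List.prod_nil, mul_one, one_mul, zpow_zero]; exact ReflTransGen.refl⟩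
  | append_singleton l' r ih =>
    intro hmem u
    have hmem' : ∀ x ∈ l', x ∈ R ∪ R⁻¹ := fun x hx => hmem x (List.mem_append_left _ hx)
    have hr : r ∈ R ∪ R⁻¹ := hmem r (by simp)
    obtain ⟨a, ha⟩ := ih hmem' u
    set x0 : G := u * l'.prod with hx0
    have hprod : u * (l' ++ [r]).prod = x0 * r := by
      rw [List.prod_append, List.prod_singleton, hx0, mul_assoc]
    rcases hr with hr | hr
    · have step : WeakConn L R (x0 * r) (t * x0) :=
        ReflTransGen.single (Or.inr ⟨t, htL, r, hr, by group⟩)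
      have lifted := wl1 _ _ ha
      have e : t * (t ^ a * u) = t ^ (1 + a) * u := by group
      rw [e] at lifted
      exact ⟨1 + a, by rw [hprod]; exact step.trans lifted⟩
    · have hr' : r⁻¹ ∈ R := Set.mem_inv.mp hr
      have step : WeakConn L R (x0 * r) (t⁻¹ * x0) :=
        ReflTransGen.single (Or.inl ⟨t, htL, r⁻¹, hr', by group⟩)
      have lifted := wlm _ _ ha
      have e : t⁻¹ * (t ^ a * u) = t ^ (-1 + a) * u := by group
      rw [e] at lifted
      exact ⟨-1 + a, by rw [hprod]; exact step.trans lifted⟩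

lemma stepB_left {t r₀ : G} (htL : t ∈ L) (hr₀ : r₀ ∈ R)
    (wl1 : ∀ x y : G, WeakConn L R x y → WeakConn L R (t * x) (t * y))
    (wlm : ∀ x y : G, WeakConn L R x y → WeakConn L R (t⁻¹ * x) (t⁻¹ * y)) :
    ∀ lu : List G, (∀ x ∈ lu, x ∈ L ∪ L⁻¹) →
      ∃ b : ℤ, WeakConn L R lu.prod (t ^ b) := by
  intro lu
  induction lu with
  | nil => exact fun _ => ⟨0, by simp only [List.prod_nil, mul_one, one_mul, zpow_zero]; exact ReflTransGen.refl⟩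
  | cons l lu' ih =>
    intro hmem
    obtain ⟨b, hb⟩ := ih (fun x hx => hmem x (List.mem_cons_of_mem _ hx))
    have hl : l ∈ L ∪ L⁻¹ := hmem l (List.mem_cons_self)
    set w' : G := lu'.prod with hw'
    rcases hl with hl | hl
    · have s1 : WeakConn L R (l * w') (w' * r₀) :=
        ReflTransGen.single (Or.inl ⟨l, hl, r₀, hr₀, by group⟩)
      have s2 : WeakConn L R (w' * r₀) (t * w') :=
        ReflTransGen.single (Or.inr ⟨t, htL, r₀, hr₀, by group⟩)
      have s3 := wl1 _ _ hb
      have e : t * t ^ b = t ^ (1 + b) := by group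
      rw [e] at s3
      exact ⟨1 + b, by rw [List.prod_cons]; exact (s1.trans s2).trans s3⟩
    · have hl' : l⁻¹ ∈ L := Set.mem_inv.mp hl
      have s1 : WeakConn L R (l * w') (w' * r₀⁻¹) :=
        ReflTransGen.single (Or.inr ⟨l⁻¹, hl', r₀, hr₀, by group⟩)
      have s2 : WeakConn L R (w' * r₀⁻¹) (t⁻¹ * w') :=
        ReflTransGen.single (Or.inl ⟨t, htL, r₀, hr₀, by group⟩)
      have s3 := wlm _ _ hb
      have e : t⁻¹ * t ^ b = t ^ (-1 + b) := by group
      rw [e] at s3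
      exact ⟨-1 + b, by rw [List.prod_cons]; exact (s1.trans s2).trans s3⟩

lemma stepA_right {t : G} (htR : t ∈ R)
    (wr1 : ∀ x y : G, WeakConn L R x y → WeakConn L R (x * t) (y * t))
    (wrm : ∀ x y : G, WeakConn L R x y → WeakConn L R (x * t⁻¹) (y * t⁻¹)) :
    ∀ lu : List G, (∀ x ∈ lu, x ∈ L ∪ L⁻¹) → ∀ v : G,
      ∃ a : ℤ, WeakConn L R (lu.prod * v) (v * t ^ a) := by
  intro lu
  induction lu with
  | nil => intro _ v; exact ⟨0, by simp only [List.prod_nil, mul_one, one_mul, zpow_zero]; exact ReflTransGen.refl⟩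
  | cons l lu' ih =>
    intro hmem v
    have hl : l ∈ L ∪ L⁻¹ := hmem l (List.mem_cons_self)
    obtain ⟨a, ha⟩ := ih (fun x hx => hmem x (List.mem_cons_of_mem _ hx)) v
    set w' : G := lu'.prod with hw'
    have hprod : (l :: lu').prod * v = l * (w' * v) := by
      rw [List.prod_cons, mul_assoc]
    rcases hl with hl | hl
    · have step : WeakConn L R (l * (w' * v)) (w' * v * t) :=
        ReflTransGen.single (Or.inl ⟨l, hl, t, htR, by group⟩)
      have lifted := wr1 _ _ ha
      have e : v * t ^ a * t = v * t ^ (a + 1) := by group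
      rw [e] at lifted
      exact ⟨a + 1, by rw [hprod]; exact step.trans lifted⟩
    · have hl' : l⁻¹ ∈ L := Set.mem_inv.mp hl
      have step : WeakConn L R (l * (w' * v)) (w' * v * t⁻¹) :=
        ReflTransGen.single (Or.inr ⟨l⁻¹, hl', t, htR, by group⟩)
      have lifted := wrm _ _ ha
      have e : v * t ^ a * t⁻¹ = v * t ^ (a - 1) := by group
      rw [e] at lifted
      exact ⟨a - 1, by rw [hprod]; exact step.trans lifted⟩

lemma stepB_right {t l₀ : G} (htR : t ∈ R) (hl₀ : l₀ ∈ L)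
    (wr1 : ∀ x y : G, WeakConn L R x y → WeakConn L R (x * t) (y * t))
    (wrm : ∀ x y : G, WeakConn L R x y → WeakConn L R (x * t⁻¹) (y * t⁻¹)) :
    ∀ lv : List G, (∀ x ∈ lv, x ∈ R ∪ R⁻¹) →
      ∃ b : ℤ, WeakConn L R lv.prod (t ^ b) := by
  intro lv
  induction lv using List.reverseRecOn with
  | nil => exact fun _ => ⟨0, by simp only [List.prod_nil, mul_one, one_mul, zpow_zero]; exact ReflTransGen.refl⟩
  | append_singleton l' r ih =>
    intro hmem
    obtain ⟨b, hb⟩ := ih (fun x hx => hmem x (List.mem_append_left _ hx))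
    have hr : r ∈ R ∪ R⁻¹ := hmem r (by simp)
    set x0 : G := l'.prod with hx0
    have hprod : (l' ++ [r]).prod = x0 * r := by
      rw [List.prod_append, List.prod_singleton]
    rcases hr with hr | hr
    · have s1 : WeakConn L R (x0 * r) (l₀ * x0) :=
        ReflTransGen.single (Or.inr ⟨l₀, hl₀, r, hr, by group⟩)
      have s2 : WeakConn L R (l₀ * x0) (x0 * t) :=
        ReflTransGen.single (Or.inl ⟨l₀, hl₀, t, htR, by group⟩)
      have s3 := wr1 _ _ hb
      have e : t ^ b * t = t ^ (b + 1) := by group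
      rw [e] at s3
      exact ⟨b + 1, by rw [hprod]; exact (s1.trans s2).trans s3⟩
    · have hr' : r⁻¹ ∈ R := Set.mem_inv.mp hr
      have s1 : WeakConn L R (x0 * r) (l₀⁻¹ * x0) :=
        ReflTransGen.single (Or.inl ⟨l₀, hl₀, r⁻¹, hr', by group⟩)
      have s2 : WeakConn L R (l₀⁻¹ * x0) (x0 * t⁻¹) :=
        ReflTransGen.single (Or.inr ⟨l₀, hl₀, t, htR, by group⟩)
      have s3 := wrm _ _ hb
      have e : t ^ b * t⁻¹ = t ^ (b - 1) := by group
      rw [e] at s3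
      exact ⟨b - 1, by rw [hprod]; exact (s1.trans s2).trans s3⟩

end Aux

theorem stmt_9 {G : Type*} [Group G] (L R : Set G) (hL : L.Nonempty) (hR : R.Nonempty)
    (hG : WordSet (L ∪ L⁻¹) * WordSet (R ∪ R⁻¹) = Set.univ)
    (hN : (L ∩ SetNormalizer L).Nonempty ∨ (R ∩ SetNormalizer R).Nonempty)
    (k : ℕ)
    (hk : IsLeast {n : ℕ | 0 < n ∧ ∃ w : G,
        (IsWord L n w ∨ IsWord L⁻¹ n w ∨ IsWord R n w ∨ IsWord R⁻¹ n w) ∧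
        WeakConn L R w 1} k) :
    ∀ C ∈ {C : Set G | ∃ g : G, C = {h | WeakConn L R g h}},
      ∀ D ∈ {C : Set G | ∃ g : G, C = {h | WeakConn L R g h}},
        ∃ φ : C ≃ D, ∀ x y : C, Arc L R (x : G) (y : G) ↔ Arc L R (φ x : G) (φ y : G) := by
  rcases hN with ⟨t, htL, htN⟩ | ⟨t, htR, htN⟩
  · -- case t ∈ L ∩ N(L) : use left translations
    set σ : ℤ → G ≃ G := fun j => Equiv.mulLeft (t ^ j) with hσ
    have h0 : ∀ x : G, σ 0 x = x := by intro x; simp [hσ]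
    have hadd : ∀ (i j : ℤ) (x : G), σ (i + j) x = σ i (σ j x) := by
      intro i j x; simp [hσ, zpow_add, mul_assoc]
    have h1 : ∀ x y : G, Arc L R x y ↔ Arc L R (σ 1 x) (σ 1 y) := by
      intro x y; simpa [hσ] using harc1_left L R htN x y
    have harc := harc_all L R σ h0 hadd h1
    have wl : ∀ (j : ℤ) (x y : G), WeakConn L R x y → WeakConn L R (σ j x) (σ j y) :=
      fun j x y h =>
        ReflTransGen.lift (r := fun g h => Arc L R g h ∨ Arc L R h g) (p := fun g h => Arc L R g h ∨ Arc L R h g) (σ j) (by intro a b hab; exact hab.imp ((harc j a b).mp) ((harc j b a).mp)) _ _ h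
    have wl1 : ∀ x y : G, WeakConn L R x y → WeakConn L R (t * x) (t * y) := by
      intro x y h; simpa [hσ] using wl 1 x y h
    have wlm : ∀ x y : G, WeakConn L R x y → WeakConn L R (t⁻¹ * x) (t⁻¹ * y) := by
      intro x y h; simpa [hσ] using wl (-1) x y h
    obtain ⟨r₀, hr₀⟩ := hR
    have hcov : ∀ g : G, ∃ m : ℤ, WeakConn L R g (σ m 1) := by
      intro g
      have hg : g ∈ WordSet (L ∪ L⁻¹) * WordSet (R ∪ R⁻¹) := by
        rw [hG]; trivial
      obtain ⟨u, hu, v, hv, rfl⟩ := hg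
      obtain ⟨nu, -, lu, -, hlumem, rfl⟩ := hu
      obtain ⟨nv, -, lv, -, hlvmem, rfl⟩ := hv
      obtain ⟨a, ha⟩ := stepA_left L R htL wl1 wlm lv hlvmem lu.prod
      obtain ⟨b, hb⟩ := stepB_left L R htL hr₀ wl1 wlm lu hlumem
      have hb' := wl a _ _ hb
      have e1 : σ a lu.prod = t ^ a * lu.prod := by simp [hσ]
      have e2 : σ a (t ^ b) = σ (a + b) 1 := by simp [hσ, zpow_add, mul_assoc]
      rw [e1, e2] at hb'
      exact ⟨a + b, ha.trans hb'⟩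
    exact abstract_main L R σ h0 hadd h1 hcov
  · -- case t ∈ R ∩ N(R) : use right translations
    set σ : ℤ → G ≃ G := fun j => Equiv.mulRight (t ^ j) with hσ
    have h0 : ∀ x : G, σ 0 x = x := by intro x; simp [hσ]
    have hadd : ∀ (i j : ℤ) (x : G), σ (i + j) x = σ i (σ j x) := by
      intro i j x; simp [hσ, mul_assoc, ← zpow_add, add_comm]
    have h1 : ∀ x y : G, Arc L R x y ↔ Arc L R (σ 1 x) (σ 1 y) := by
      intro x y; simpa [hσ] using harc1_right L R htN x y
    have harc := harc_all L R σ h0 hadd h1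
    have wl : ∀ (j : ℤ) (x y : G), WeakConn L R x y → WeakConn L R (σ j x) (σ j y) :=
      fun j x y h =>
        ReflTransGen.lift (r := fun g h => Arc L R g h ∨ Arc L R h g) (p := fun g h => Arc L R g h ∨ Arc L R h g) (σ j) (by intro a b hab; exact hab.imp ((harc j a b).mp) ((harc j b a).mp)) _ _ h
    have wr1 : ∀ x y : G, WeakConn L R x y → WeakConn L R (x * t) (y * t) := by
      intro x y h; simpa [hσ] using wl 1 x y h
    have wrm : ∀ x y : G, WeakConn L R x y → WeakConn L R (x * t⁻¹) (y * t⁻¹) := by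
      intro x y h; simpa [hσ] using wl (-1) x y h
    obtain ⟨l₀, hl₀⟩ := hL
    have hcov : ∀ g : G, ∃ m : ℤ, WeakConn L R g (σ m 1) := by
      intro g
      have hg : g ∈ WordSet (L ∪ L⁻¹) * WordSet (R ∪ R⁻¹) := by
        rw [hG]; trivial
      obtain ⟨u, hu, v, hv, rfl⟩ := hg
      obtain ⟨nu, -, lu, -, hlumem, rfl⟩ := hu
      obtain ⟨nv, -, lv, -, hlvmem, rfl⟩ := hv
      obtain ⟨a, ha⟩ := stepA_right L R htR wr1 wrm lu hlumem lv.prod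
      obtain ⟨b, hb⟩ := stepB_right L R htR hl₀ wr1 wrm lv hlvmem
      have hb' := wl a _ _ hb
      have e1 : σ a lv.prod = lv.prod * t ^ a := by simp [hσ]
      have e2 : σ a (t ^ b) = σ (b + a) 1 := by simp [hσ, zpow_add, mul_assoc]
      rw [e1, e2] at hb'
      exact ⟨b + a, ha.trans hb'⟩
    exact abstract_main L R σ h0 hadd h1 hcov
end
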